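/- arXiv:math/0507128 — 3 statements merged into one kernel-verified Lean document; each statement's English description precedes it below -/
import Mathlib

section
/- Let X be a set of primes and G_X = (ℤ[{1/p : p ∈ X}], +) the additive group of the localization. Then for a prime q, the q-height of 1 in G_X is ∞ if q ∈ X and 0 if q ∉ X. Consequently, G_X ≅ G_Y as abelian groups implies X = Y. -/
/-- The `p`-height of an element `a` of an additive group: the supremum (in `ℕ∞`) of the
`k` such that `a` is divisible by `p^k`. -/
noncomputable def pHeight {G : Type*} [AddCommGroup G] (p : ℕ) (a : G) : ℕ∞ :=
  sSup ((fun k : ℕ => (k : ℕ∞)) '' {k : ℕ | ∃ b : G, (p ^ k : ℕ) • b = a})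

/-- In the subring generated by inverses of primes in `Z`, no denominator is divisible by a
prime `q ∉ Z`. -/
lemma aux_den {Z : Set ℕ} (hZ : ∀ p ∈ Z, Nat.Prime p) {q : ℕ} (hq : q.Prime) (hqZ : q ∉ Z) :
    ∀ x ∈ Subring.closure {x : ℚ | ∃ p ∈ Z, x = ((p : ℕ) : ℚ)⁻¹}, ¬ (q ∣ x.den) := by
  intro x hx
  induction hx using Subring.closure_induction with
  | mem x hx =>
    obtain ⟨p, hpZ, rfl⟩ := hx
    have hp := hZ p hpZ
    rw [Rat.inv_natCast_den_of_pos hp.pos]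
    intro hdvd
    exact hqZ (((Nat.prime_dvd_prime_iff_eq hq hp).mp hdvd) ▸ hpZ)
  | zero => simpa using hq.one_lt.ne'
  | one => simpa using hq.one_lt.ne'
  | add x y hx hy ihx ihy =>
    intro h
    rcases (Nat.Prime.dvd_mul hq).mp (h.trans (Rat.add_den_dvd x y)) with h' | h'
    · exact ihx h'
    · exact ihy h'
  | neg x hx ih => simpa using ih
  | mul x y hx hy ihx ihy =>
    intro h
    rcases (Nat.Prime.dvd_mul hq).mp (h.trans (Rat.mul_den_dvd x y)) with h' | h'
    · exact ihx h'
    · exact ihy h'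

/-- If `q` does not divide the denominator of `b` and `q^k * b = a ≠ 0`, then
`q^k ≤ |a.num|`. -/
lemma aux_bound {q k : ℕ} (hq : q.Prime) {a b : ℚ} (hb : ¬ q ∣ b.den)
    (heq : ((q ^ k : ℕ) : ℚ) * b = a) (ha : a ≠ 0) : q ^ k ≤ a.num.natAbs := by
  have hcross : a.num * (b.den : ℤ) = (q : ℤ) ^ k * b.num * a.den := by
    have h1 : ((a.num : ℚ) / a.den) = a := Rat.num_div_den a
    have h2 : ((b.num : ℚ) / b.den) = b := Rat.num_div_den b
    rw [← h1, ← h2] at heq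
    have had : ((a.den : ℚ)) ≠ 0 := by exact_mod_cast a.den_nz
    have hbd : ((b.den : ℚ)) ≠ 0 := by exact_mod_cast b.den_nz
    field_simp at heq
    rw [mul_comm a.num]
    exact_mod_cast heq.symm
  have hdvd : (q : ℤ) ^ k ∣ a.num * b.den := ⟨b.num * a.den, by linarith [hcross]⟩
  have hdvdn : q ^ k ∣ a.num.natAbs * b.den := by
    have := Int.natAbs_dvd_natAbs.mpr hdvd
    simpa [Int.natAbs_mul, Int.natAbs_pow] using this
  have hcop : Nat.Coprime (q ^ k) b.den :=
    Nat.Coprime.pow_left _ ((Nat.Prime.coprime_iff_not_dvd hq).mpr hb)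
  have hdvd2 : q ^ k ∣ a.num.natAbs := hcop.dvd_of_dvd_mul_right hdvdn
  exact Nat.le_of_dvd (Int.natAbs_pos.mpr (Rat.num_ne_zero.mpr ha)) hdvd2

/-- If `q ∈ X` then for every `k` there is `b` in `S X` with `q^k • b = 1`. -/
lemma aux_div {Z : Set ℕ} {q : ℕ} (hq : q.Prime) (hqZ : q ∈ Z)
    (S : Subring ℚ) (hS : S = Subring.closure {x : ℚ | ∃ p ∈ Z, x = ((p : ℕ) : ℚ)⁻¹}) :
    ∀ k : ℕ, ∃ b : S, (q ^ k : ℕ) • b = 1 := by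
  intro k
  have hinv : ((q : ℚ)⁻¹) ∈ S := by
    rw [hS]; exact Subring.subset_closure ⟨q, hqZ, rfl⟩
  refine ⟨⟨((q : ℚ)⁻¹) ^ k, pow_mem hinv k⟩, ?_⟩
  have hq0 : (q : ℚ) ≠ 0 := Nat.cast_ne_zero.mpr hq.pos.ne'
  ext
  push_cast
  rw [nsmul_eq_mul]
  push_cast
  rw [← mul_pow, mul_inv_cancel₀ hq0, one_pow]

/-- If `q ∉ Y` (a set of primes), then no nonzero element of `S Y` is divisible by all powers
of `q`. -/
lemma aux_not_div {Y : Set ℕ} (hY : ∀ p ∈ Y, Nat.Prime p) {q : ℕ} (hq : q.Prime)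
    (hqY : q ∉ Y) (S : Subring ℚ)
    (hS : S = Subring.closure {x : ℚ | ∃ p ∈ Y, x = ((p : ℕ) : ℚ)⁻¹})
    (a : S) (ha : a ≠ 0) : ¬ ∀ k : ℕ, ∃ b : S, (q ^ k : ℕ) • b = a := by
  intro h
  set M := (a : ℚ).num.natAbs with hM
  obtain ⟨b, hb⟩ := h (M + 1)
  have hbden : ¬ q ∣ (b : ℚ).den := by
    apply aux_den hY hq hqY
    rw [← hS]; exact b.2
  have ha' : (a : ℚ) ≠ 0 := fun h0 => ha (Subtype.ext h0)
  have heq : ((q ^ (M + 1) : ℕ) : ℚ) * (b : ℚ) = (a : ℚ) := by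
    have := congrArg (Subtype.val) hb
    push_cast at this ⊢
    rw [← this, nsmul_eq_mul]
    push_cast
    ring
  have hle : q ^ (M + 1) ≤ M := aux_bound hq hbden heq ha'
  have h2 : M < 2 ^ (M + 1) := (Nat.lt_two_pow_self (n := M)).trans
    (Nat.pow_lt_pow_right one_lt_two (Nat.lt_succ_self M))
  have h3 : 2 ^ (M + 1) ≤ q ^ (M + 1) := Nat.pow_le_pow_left hq.two_le _
  omega

lemma aux_subset {X Y : Set ℕ} (hX : ∀ p ∈ X, Nat.Prime p) (hY : ∀ p ∈ Y, Nat.Prime p)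
    (SX SY : Subring ℚ)
    (hSX : SX = Subring.closure {x : ℚ | ∃ p ∈ X, x = ((p : ℕ) : ℚ)⁻¹})
    (hSY : SY = Subring.closure {x : ℚ | ∃ p ∈ Y, x = ((p : ℕ) : ℚ)⁻¹})
    (e : SX ≃+ SY) : X ⊆ Y := by
  intro q hqX
  have hq := hX q hqX
  by_contra hqY
  have h1 : ∀ k : ℕ, ∃ b : SY, (q ^ k : ℕ) • b = e 1 := by
    intro k
    obtain ⟨b, hb⟩ := aux_div hq hqX SX hSX k
    exact ⟨e b, by rw [← map_nsmul, hb]⟩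
  have he1 : e 1 ≠ 0 := by
    intro h
    have : (1 : SX) = 0 := e.injective (by rw [h, map_zero])
    exact one_ne_zero (congrArg Subtype.val this)
  exact aux_not_div hY hq hqY SY hSY (e 1) he1 h1

/-- For a set `X` of primes let `G_X` be the additive group of
`ℤ[{1/p : p ∈ X}]`. For a prime `q`, the `q`-height of `1` in `G_X` is `∞` if `q ∈ X` and
`0` if `q ∉ X`; consequently `G_X ≅ G_Y` (as abelian groups) implies `X = Y`. -/
theorem localization_addGroup_heights
    (S : Set ℕ → Subring ℚ)
    (hS : ∀ Z : Set ℕ, S Z = Subring.closure {x : ℚ | ∃ p ∈ Z, x = ((p : ℕ) : ℚ)⁻¹}) :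
    (∀ (X : Set ℕ), (∀ p ∈ X, Nat.Prime p) → ∀ q : ℕ, q.Prime →
        ((q ∈ X → pHeight q (1 : S X) = ⊤) ∧ (q ∉ X → pHeight q (1 : S X) = 0))) ∧
      (∀ (X Y : Set ℕ), (∀ p ∈ X, Nat.Prime p) → (∀ p ∈ Y, Nat.Prime p) →
        Nonempty ((S X) ≃+ (S Y)) → X = Y) := by
  constructor
  · intro X hX q hq
    constructor
    · intro hqX
      have hall := aux_div hq hqX (S X) (hS X)
      unfold pHeight
      rw [sSup_eq_top]
      intro c hc
      lift c to ℕ using hc.ne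
      exact ⟨((c + 1 : ℕ) : ℕ∞), ⟨c + 1, hall (c + 1), rfl⟩, by exact_mod_cast Nat.lt_succ_self c⟩
    · intro hqX
      unfold pHeight
      have hset : {k : ℕ | ∃ b : S X, (q ^ k : ℕ) • b = 1} = {0} := by
        ext k
        simp only [Set.mem_setOf_eq, Set.mem_singleton_iff]
        constructor
        · rintro ⟨b, hb⟩
          by_contra hk
          -- consider c = q^(k-1) • b; then q • c = 1, so c = q⁻¹, contradiction
          set c : S X := (q ^ (k - 1) : ℕ) • b with hc
          have hqc : (q : ℕ) • c = 1 := by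
            rw [hc, ← smul_assoc]
            have : (q : ℕ) • (q ^ (k - 1) : ℕ) = q ^ k := by
              simp only [smul_eq_mul]
              rw [← pow_succ']
              congr 1
              omega
            rw [this, hb]
          have hcval : (c : ℚ) = (q : ℚ)⁻¹ := by
            have := congrArg Subtype.val hqc
            push_cast at this
            rw [nsmul_eq_mul] at this
            exact eq_inv_of_mul_eq_one_right (by exact_mod_cast this)
          have hden : q ∣ (c : ℚ).den := by
            rw [hcval, Rat.inv_natCast_den_of_pos hq.pos]
          refine aux_den hX hq hqX (c : ℚ) ?_ hden
          rw [← hS X]; exact c.2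
        · rintro rfl
          exact ⟨1, by simp⟩
      rw [hset]
      simp
  · rintro X Y hX hY ⟨e⟩
    exact le_antisymm (aux_subset hX hY _ _ (hS X) (hS Y) e)
      (aux_subset hY hX _ _ (hS Y) (hS X) e.symm)
end

section
/- If χ and χ' are two characteristics (functions from primes to ℕ ∪ {∞}) of nonzero elements a, a' of the same torsion-free abelian group of rank 1 (a subgroup of ℚ), then χ and χ' are equivalent: they differ at only finitely many primes, and at every prime where they differ both values are finite. -/
lemma le_pHeight_iff {G : Type*} [AddCommGroup G] (p : ℕ) (a : G) (k : ℕ) :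
    (k : ℕ∞) ≤ pHeight p a ↔ ∃ b : G, (p ^ k : ℕ) • b = a := by
  constructor
  · intro h
    rcases Nat.eq_zero_or_pos k with rfl | hk
    · exact ⟨a, by simp⟩
    by_contra hc
    have hub : pHeight p a ≤ ((k - 1 : ℕ) : ℕ∞) := by
      apply sSup_le
      rintro z ⟨m, ⟨b, hb⟩, rfl⟩
      simp only [Nat.cast_le]
      by_contra hm
      push_neg at hm
      refine hc ⟨(p ^ (m - k) : ℕ) • b, ?_⟩
      rw [← mul_smul, ← pow_add]
      rw [show k + (m - k) = m by omega, hb]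
    have := le_trans h hub
    rw [Nat.cast_le] at this
    omega
  · rintro ⟨b, hb⟩
    exact le_sSup ⟨k, ⟨b, hb⟩, rfl⟩

lemma enat_le_of_forall {x y : ℕ∞} (h : ∀ k : ℕ, (k : ℕ∞) ≤ x → (k : ℕ∞) ≤ y) : x ≤ y := by
  rcases eq_or_ne y ⊤ with rfl | hy
  · exact le_top
  by_contra hxy
  push_neg at hxy
  obtain ⟨n, rfl⟩ := WithTop.ne_top_iff_exists.1 hy
  have h1 : ((n + 1 : ℕ) : ℕ∞) ≤ x := by
    push_cast
    exact ENat.add_one_le_iff (by simp) |>.2 hxy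
  have := h (n + 1) h1
  simp only [Nat.cast_add, Nat.cast_one] at this
  exact absurd this (not_le.2 ((ENat.lt_add_one_iff hy).2 le_rfl))

lemma coe_nsmul_q (G : AddSubgroup ℚ) (n : ℕ) (x : G) : ((n • x : G) : ℚ) = (n : ℚ) * x := by
  push_cast
  ring

lemma coe_zsmul_q (G : AddSubgroup ℚ) (n : ℤ) (x : G) : ((n • x : G) : ℚ) = (n : ℚ) * x := by
  push_cast
  rw [zsmul_eq_mul]

lemma nsmul_cancel (G : AddSubgroup ℚ) {p : ℕ} (hp : p ≠ 0) {y z : G}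
    (h : p • y = p • z) : y = z := by
  apply Subtype.ext
  have : ((p • y : G) : ℚ) = ((p • z : G) : ℚ) := by rw [h]
  rw [coe_nsmul_q, coe_nsmul_q] at this
  exact mul_left_cancel₀ (by exact_mod_cast hp) this

lemma pHeight_p_smul (G : AddSubgroup ℚ) (p : ℕ) (hp : p.Prime) (x : G) :
    pHeight p (p • x) = pHeight p x + 1 := by
  apply le_antisymm
  · apply enat_le_of_forall
    intro k hk
    rw [le_pHeight_iff] at hk
    obtain ⟨b, hb⟩ := hk
    cases k with
    | zero => simp
    | succ j =>
      have hbx : (p ^ j : ℕ) • b = x := by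
        refine nsmul_cancel G hp.ne_zero ?_
        rw [← mul_smul, ← pow_succ']
        exact hb
      have hj : (j : ℕ∞) ≤ pHeight p x := (le_pHeight_iff _ _ _).2 ⟨b, hbx⟩
      calc ((j + 1 : ℕ) : ℕ∞) = (j : ℕ∞) + 1 := by push_cast; ring
      _ ≤ pHeight p x + 1 := add_le_add_left hj 1
  · apply enat_le_of_forall
    intro k hk
    cases k with
    | zero => simp
    | succ j =>
      have hj : (j : ℕ∞) ≤ pHeight p x := by
        have : ((j + 1 : ℕ) : ℕ∞) = (j : ℕ∞) + 1 := by push_cast; ring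
        rw [this] at hk
        exact (WithTop.add_le_add_iff_right (by simp : (1:ℕ∞) ≠ ⊤)).1 hk
      rw [le_pHeight_iff] at hj ⊢
      obtain ⟨b, hb⟩ := hj
      exact ⟨b, by rw [pow_succ', mul_smul, hb]⟩

lemma pHeight_coprime_smul (G : AddSubgroup ℚ) (p : ℕ) (hp : p.Prime) (n : ℤ)
    (hn : ¬ (p : ℤ) ∣ n) (x : G) : pHeight p (n • x) = pHeight p x := by
  apply le_antisymm
  · apply enat_le_of_forall
    intro k hk
    rw [le_pHeight_iff] at hk ⊢
    obtain ⟨b, hb⟩ := hk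
    have hb' : ((p : ℤ) ^ k) • b = n • x := by
      rw [← hb, ← natCast_zsmul]
      push_cast
      ring_nf
    have hcop : IsCoprime ((p : ℤ) ^ k) n := by
      refine IsCoprime.pow_left ?_
      rw [Prime.coprime_iff_not_dvd (Nat.prime_iff_prime_int.1 hp)]
      exact hn
    obtain ⟨u, v, huv⟩ := hcop
    refine ⟨u • x + v • b, ?_⟩
    have : ((p : ℤ) ^ k) • (u • x + v • b) = x := by
      rw [smul_add, smul_smul, smul_smul, mul_comm ((p:ℤ)^k) v, mul_smul v, hb', smul_smul,
        mul_comm ((p:ℤ)^k) u, ← add_smul, huv, one_smul]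
    have hgoal : (p ^ k : ℕ) • (u • x + v • b) = ((p : ℤ) ^ k) • (u • x + v • b) := by
      rw [← natCast_zsmul]
      norm_cast
    rw [hgoal]
    exact this
  · apply enat_le_of_forall
    intro k hk
    rw [le_pHeight_iff] at hk ⊢
    obtain ⟨b, hb⟩ := hk
    refine ⟨n • b, ?_⟩
    rw [← natCast_zsmul, smul_comm, natCast_zsmul, hb]

lemma pHeight_pow_smul (G : AddSubgroup ℚ) (p : ℕ) (hp : p.Prime) (v : ℕ) (x : G) :
    pHeight p ((p ^ v : ℕ) • x) = pHeight p x + v := by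
  induction v with
  | zero => simp
  | succ v ih =>
    have h1 : (p ^ (v + 1) : ℕ) • x = p • ((p ^ v : ℕ) • x) := by
      rw [← mul_smul, ← pow_succ']
    rw [h1, pHeight_p_smul G p hp, ih]
    push_cast
    rw [add_assoc]

lemma pHeight_neg {H : Type*} [AddCommGroup H] (p : ℕ) (x : H) :
    pHeight p (-x) = pHeight p x := by
  unfold pHeight
  congr 1
  ext z
  constructor
  · rintro ⟨k, ⟨b, hb⟩, rfl⟩
    exact ⟨k, ⟨-b, by rw [smul_neg, hb, neg_neg]⟩, rfl⟩
  · rintro ⟨k, ⟨b, hb⟩, rfl⟩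
    exact ⟨k, ⟨-b, by rw [smul_neg, hb]⟩, rfl⟩

lemma pHeight_zsmul (G : AddSubgroup ℚ) (p : ℕ) (hp : p.Prime) (m : ℤ) (hm : m ≠ 0) (x : G) :
    pHeight p (m • x) = pHeight p x + (m.natAbs.factorization p : ℕ∞) := by
  set v := m.natAbs.factorization p with hv
  obtain ⟨c, hc⟩ : (p ^ v : ℕ) ∣ m.natAbs := Nat.ordProj_dvd _ _
  have hna : m.natAbs ≠ 0 := Int.natAbs_ne_zero.2 hm
  have hpc : ¬ (p : ℤ) ∣ (c : ℤ) := by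
    rw [Int.natCast_dvd_natCast]
    intro hdvd
    obtain ⟨d, hd⟩ := hdvd
    refine Nat.pow_succ_factorization_not_dvd hna hp ?_
    rw [← hv, hc, hd]
    exact ⟨d, by ring⟩
  have hstep : pHeight p ((m.natAbs : ℤ) • x) = pHeight p x + v := by
    rw [natCast_zsmul, hc, mul_smul, pHeight_pow_smul G p hp, ← natCast_zsmul,
      pHeight_coprime_smul G p hp _ hpc]
  rcases Int.natAbs_eq m with h | h
  · rw [h] at hstep ⊢; exact hstep
  · rw [h, neg_smul, pHeight_neg]
    exact hstep

/-- The characteristics of two nonzero elements of the same rank-1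
torsion-free abelian group (a nonzero subgroup of `ℚ`) are equivalent: they differ at only
finitely many primes, and where they differ both values are finite. -/
theorem characteristics_equivalent
    (G : AddSubgroup ℚ) (hG : G ≠ ⊥) (a a' : G) (ha : a ≠ 0) (ha' : a' ≠ 0) :
    {p : ℕ | p.Prime ∧ pHeight p a ≠ pHeight p a'}.Finite ∧
      ∀ p : ℕ, p.Prime → pHeight p a ≠ pHeight p a' →
        pHeight p a < ⊤ ∧ pHeight p a' < ⊤ := by
  have hq : (a : ℚ) ≠ 0 := fun h => ha (Subtype.ext h)
  have hq' : (a' : ℚ) ≠ 0 := fun h => ha' (Subtype.ext h)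
  set m : ℤ := (a' : ℚ).num * ((a : ℚ).den : ℤ) with hm_def
  set n : ℤ := (a : ℚ).num * ((a' : ℚ).den : ℤ) with hn_def
  have hm : m ≠ 0 := mul_ne_zero (Rat.num_ne_zero.2 hq') (by exact_mod_cast (a : ℚ).den_nz)
  have hn : n ≠ 0 := mul_ne_zero (Rat.num_ne_zero.2 hq) (by exact_mod_cast (a' : ℚ).den_nz)
  have key : m • a = n • a' := by
    apply Subtype.ext
    rw [coe_zsmul_q, coe_zsmul_q, hm_def, hn_def]
    have h1 : ((a : ℚ).den : ℚ) * (a : ℚ) = (a : ℚ).num := by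
      rw [mul_comm]; exact_mod_cast Rat.mul_den_eq_num (a : ℚ)
    have h2 : ((a' : ℚ).den : ℚ) * (a' : ℚ) = (a' : ℚ).num := by
      rw [mul_comm]; exact_mod_cast Rat.mul_den_eq_num (a' : ℚ)
    push_cast
    calc ((a' : ℚ).num : ℚ) * (a : ℚ).den * a
        = ((a' : ℚ).num : ℚ) * (((a : ℚ).den : ℚ) * a) := by ring
      _ = ((a' : ℚ).num : ℚ) * (a : ℚ).num := by rw [h1]
      _ = ((a : ℚ).num : ℚ) * (((a' : ℚ).den : ℚ) * a') := by rw [h2]; ring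
      _ = ((a : ℚ).num : ℚ) * (a' : ℚ).den * a' := by ring
  have hpq : ∀ p : ℕ, p.Prime →
      pHeight p a + (m.natAbs.factorization p : ℕ∞)
        = pHeight p a' + (n.natAbs.factorization p : ℕ∞) := by
    intro p hp
    rw [← pHeight_zsmul G p hp m hm a, ← pHeight_zsmul G p hp n hn a', key]
  have hsub : {p : ℕ | p.Prime ∧ pHeight p a ≠ pHeight p a'}
      ⊆ ((m * n).natAbs.primeFactors : Set ℕ) := by
    rintro p ⟨hp, hne⟩
    have hdvd : p ∣ m.natAbs ∨ p ∣ n.natAbs := by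
      by_contra h
      push_neg at h
      have h1 : m.natAbs.factorization p = 0 := Nat.factorization_eq_zero_of_not_dvd h.1
      have h2 : n.natAbs.factorization p = 0 := Nat.factorization_eq_zero_of_not_dvd h.2
      have := hpq p hp
      rw [h1, h2] at this
      simp only [Nat.cast_zero, add_zero] at this
      exact hne this
    simp only [Finset.coe_sort_coe, Finset.mem_coe, Nat.mem_primeFactors]
    refine ⟨hp, ?_, by rw [Int.natAbs_mul]; exact mul_ne_zero (Int.natAbs_ne_zero.2 hm) (Int.natAbs_ne_zero.2 hn)⟩
    rw [Int.natAbs_mul]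
    rcases hdvd with h | h
    · exact h.mul_right _
    · exact h.mul_left _
  refine ⟨Set.Finite.subset ((m * n).natAbs.primeFactors.finite_toSet) hsub, ?_⟩
  intro p hp hne
  have heq := hpq p hp
  have hfin : ∀ x y : ℕ∞, ∀ u w : ℕ, x + (u : ℕ∞) = y + (w : ℕ∞) → x = ⊤ → y = ⊤ := by
    intro x y u w h hx
    rw [hx, top_add] at h
    rcases WithTop.add_eq_top.1 h.symm with h' | h'
    · exact h'
    · exact absurd h' (WithTop.natCast_ne_top w)
  constructor
  · rw [lt_top_iff_ne_top]
    intro htop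
    exact hne (htop.trans (hfin _ _ _ _ heq htop).symm)
  · rw [lt_top_iff_ne_top]
    intro htop
    exact hne ((hfin _ _ _ _ heq.symm htop).trans htop.symm)
end

section
/- Baer's theorem (one direction): if G and H are nonzero subgroups of (ℚ,+) and there exist nonzero a ∈ G, b ∈ H with equal characteristics (h_p^G(a) = h_p^H(b) for all primes p), then G ≅ H. -/
/-- If `s ∣ n` and `α/n ∈ G` then `α/s ∈ G`. -/
lemma div_nat_mem_of_dvd (G : AddSubgroup ℚ) {α : ℚ} {s n : ℕ} (hn : 0 < n)
    (hdvd : s ∣ n) (hmem : α / (n : ℚ) ∈ G) : α / (s : ℚ) ∈ G := by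
  have hs : 0 < s := Nat.pos_of_dvd_of_pos hdvd hn
  obtain ⟨t, rfl⟩ := hdvd
  have ht : 0 < t := Nat.pos_of_mul_pos_left (by rwa [mul_comm] at hn)
  have hsQ : ((s:ℚ)) ≠ 0 := Nat.cast_ne_zero.mpr hs.ne'
  have htQ : ((t:ℚ)) ≠ 0 := Nat.cast_ne_zero.mpr ht.ne'
  have : α / (s : ℚ) = t • (α / ((s * t : ℕ) : ℚ)) := by
    rw [nsmul_eq_mul]
    push_cast
    field_simp
  rw [this]
  exact AddSubgroup.nsmul_mem G hmem t

/-- Splitting divisibility at coprime factors. -/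
lemma div_mul_mem_iff (G : AddSubgroup ℚ) {α : ℚ} {s t : ℕ} (hs : 0 < s) (ht : 0 < t)
    (hco : Nat.Coprime s t) :
    α / ((s * t : ℕ) : ℚ) ∈ G ↔ α / (s : ℚ) ∈ G ∧ α / (t : ℚ) ∈ G := by
  constructor
  · intro hmem
    exact ⟨div_nat_mem_of_dvd G (by positivity) ⟨t, rfl⟩ hmem,
           div_nat_mem_of_dvd G (by positivity) ⟨s, mul_comm s t⟩ hmem⟩
  · rintro ⟨h1, h2⟩
    have hcop : IsCoprime (s : ℤ) (t : ℤ) := Int.isCoprime_iff_gcd_eq_one.mpr (by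
      simpa [Int.gcd] using hco)
    obtain ⟨u, v, huv⟩ := hcop
    have hsQ : ((s:ℚ)) ≠ 0 := Nat.cast_ne_zero.mpr hs.ne'
    have htQ : ((t:ℚ)) ≠ 0 := Nat.cast_ne_zero.mpr ht.ne'
    have huvQ : (u : ℚ) * s + (v : ℚ) * t = 1 := by exact_mod_cast congrArg (Int.cast : ℤ → ℚ) huv
    have key2 : (u:ℚ) * (α / t) + (v:ℚ) * (α / s)
        = (((u:ℚ)*s + (v:ℚ)*t) * α) / ((s:ℚ) * t) := by
      field_simp
    have key : α / ((s * t : ℕ) : ℚ) = u • (α / (t : ℚ)) + v • (α / (s : ℚ)) := by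
      rw [zsmul_eq_mul, zsmul_eq_mul, key2, huvQ, one_mul]
      push_cast
      ring_nf
    rw [key]
    exact G.add_mem (AddSubgroup.zsmul_mem G h2 u) (AddSubgroup.zsmul_mem G h1 v)

lemma exists_smul_iff {G : AddSubgroup ℚ} (a : G) {p : ℕ} (hp : 0 < p) (k : ℕ) :
    (∃ c : G, (p ^ k : ℕ) • c = a) ↔ ((a : ℚ) / ((p ^ k : ℕ) : ℚ) ∈ G) := by
  have hpk : ((p ^ k : ℕ) : ℚ) ≠ 0 := by
    exact_mod_cast (pow_pos hp k).ne'
  constructor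
  · rintro ⟨c, hc⟩
    have hc' : ((p ^ k : ℕ) : ℚ) * (c : ℚ) = (a : ℚ) := by
      rw [← hc]; push_cast; ring
    have : (a : ℚ) / ((p ^ k : ℕ) : ℚ) = (c : ℚ) := by
      field_simp [← hc']
      exact hc'.symm
    rw [this]; exact c.2
  · intro hm
    refine ⟨⟨(a : ℚ) / ((p ^ k : ℕ) : ℚ), hm⟩, ?_⟩
    ext
    push_cast
    field_simp
    rw [nsmul_eq_mul, ← Nat.cast_pow, mul_comm, div_mul_cancel₀ _ hpk]

lemma le_pHeight_iff_s12 {G : AddSubgroup ℚ} (a : G) {p : ℕ} (hp : 0 < p) (k : ℕ) :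
    (k : ℕ∞) ≤ pHeight p a ↔ (a : ℚ) / ((p ^ k : ℕ) : ℚ) ∈ G := by
  constructor
  · intro hk
    rcases Nat.eq_zero_or_pos k with rfl | hkpos
    · simp only [pow_zero, Nat.cast_one, div_one]
      exact a.2
    · have h1 : ((k - 1 : ℕ) : ℕ∞) < pHeight p a := by
        refine lt_of_lt_of_le ?_ hk
        exact_mod_cast Nat.sub_lt hkpos one_pos
      obtain ⟨x, hx, hlt⟩ := lt_sSup_iff.mp h1
      obtain ⟨j, hj, rfl⟩ := hx
      have hjk : k ≤ j := by
        have hlt' : ((k - 1 : ℕ) : ℕ∞) < ((j : ℕ) : ℕ∞) := hlt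
        have : (k - 1 : ℕ) < j := by exact_mod_cast hlt'
        omega
      have hmemj := (exists_smul_iff a hp j).mp hj
      have : (p ^ k : ℕ) ∣ (p ^ j : ℕ) := pow_dvd_pow p hjk
      exact div_nat_mem_of_dvd G (pow_pos hp j) this hmemj
  · intro hm
    exact le_sSup ⟨k, (exists_smul_iff a hp k).mpr hm, rfl⟩

lemma div_nat_mem_iff_of_heights (G H : AddSubgroup ℚ) (α β : ℚ)
    (hαG : α ∈ G) (hβH : β ∈ H)
    (hpk : ∀ p : ℕ, p.Prime → ∀ k : ℕ,
      (α / ((p ^ k : ℕ) : ℚ) ∈ G ↔ β / ((p ^ k : ℕ) : ℚ) ∈ H)) :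
    ∀ n : ℕ, 0 < n → (α / (n : ℚ) ∈ G ↔ β / (n : ℚ) ∈ H) := by
  intro n
  induction n using Nat.strong_induction_on with
  | _ n ih =>
    intro hn
    rcases eq_or_lt_of_le (show 1 ≤ n from hn) with h1 | h2
    · rw [← h1]
      simp only [Nat.cast_one, div_one]
      exact iff_of_true hαG hβH
    · have hne1 : n ≠ 1 := by omega
      set p := n.minFac with hpdef
      have hp : p.Prime := Nat.minFac_prime hne1
      set k := n.factorization p with hkdef
      set m := n / p ^ k with hmdef
      have hnm : p ^ k * m = n := Nat.ordProj_mul_ordCompl_eq_self n p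
      have hkpos : 0 < k := by
        rw [hkdef]
        exact (hp.factorization_pos_of_dvd hn.ne' (Nat.minFac_dvd n))
      have hmpos : 0 < m := Nat.ordCompl_pos p hn.ne'
      have hmlt : m < n := Nat.div_lt_self hn (one_lt_pow₀ hp.one_lt hkpos.ne')
      have hco : Nat.Coprime (p ^ k) m := Nat.Coprime.pow_left k (Nat.coprime_ordCompl hp hn.ne')
      rw [← hnm]
      rw [div_mul_mem_iff G (pow_pos hp.pos k) hmpos hco,
          div_mul_mem_iff H (pow_pos hp.pos k) hmpos hco,
          hpk p hp k, ih m hmlt hmpos]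

lemma mul_mem_map (G H : AddSubgroup ℚ) (α β : ℚ) (hα : α ≠ 0) (hαG : α ∈ G)
    (keyn : ∀ n : ℕ, 0 < n → α / (n : ℚ) ∈ G → β / (n : ℚ) ∈ H) :
    ∀ x ∈ G, β / α * x ∈ H := by
  intro x hx
  have hcop : IsCoprime ((x / α).num) (((x / α).den : ℤ)) := by
    rw [Int.isCoprime_iff_gcd_eq_one]
    simpa [Int.gcd] using (x / α).reduced
  obtain ⟨N, D, hD, hND, hrq⟩ : ∃ (N : ℤ) (D : ℕ), 0 < D ∧ IsCoprime N (D : ℤ) ∧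
      x / α = (N : ℚ) / D :=
    ⟨(x / α).num, (x / α).den, (x / α).pos, hcop, (Rat.num_div_den (x / α)).symm⟩
  have hden : ((D : ℚ)) ≠ 0 := by exact_mod_cast hD.ne'
  have hxr : x = (N : ℚ) / D * α := by
    rw [← hrq]; field_simp
  obtain ⟨u, v, huv⟩ := hND
  have huvQ : (u : ℚ) * N + (v : ℚ) * D = 1 := by
    exact_mod_cast congrArg (Int.cast : ℤ → ℚ) huv
  have hαn : α / (D : ℚ) ∈ G := by
    have key : α / (D : ℚ) = u • x + v • α := by
      rw [zsmul_eq_mul, zsmul_eq_mul, hxr]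
      field_simp
      linear_combination -huvQ
    rw [key]
    exact G.add_mem (AddSubgroup.zsmul_mem G hx u) (AddSubgroup.zsmul_mem G hαG v)
  have hβn := keyn D hD hαn
  have key2 : β / α * x = N • (β / (D : ℚ)) := by
    rw [zsmul_eq_mul, hxr]
    field_simp
  rw [key2]
  exact AddSubgroup.zsmul_mem H hβn N

/-- Baer's theorem (one direction): if `G`, `H` are nonzero subgroups of
`(ℚ,+)` containing nonzero elements `a`, `b` with equal characteristics, then `G ≅ H`. -/
theorem baer_isomorphism_of_eq_characteristic
    (G H : AddSubgroup ℚ) (hG : G ≠ ⊥) (hH : H ≠ ⊥)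
    (a : G) (b : H) (ha : a ≠ 0) (hb : b ≠ 0)
    (h : ∀ p : ℕ, p.Prime → pHeight p a = pHeight p b) :
    Nonempty (G ≃+ H) := by
  have hα : (a : ℚ) ≠ 0 := by simpa using ha
  have hβ : (b : ℚ) ≠ 0 := by simpa using hb
  have hpk : ∀ p : ℕ, p.Prime → ∀ k : ℕ,
      ((a : ℚ) / ((p ^ k : ℕ) : ℚ) ∈ G ↔ (b : ℚ) / ((p ^ k : ℕ) : ℚ) ∈ H) := by
    intro p hp k
    rw [← le_pHeight_iff_s12 a hp.pos k, ← le_pHeight_iff_s12 b hp.pos k, h p hp]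
  have keyn := div_nat_mem_iff_of_heights G H (a : ℚ) (b : ℚ) a.2 b.2 hpk
  have fwd : ∀ x ∈ G, (b : ℚ) / (a : ℚ) * x ∈ H :=
    mul_mem_map G H _ _ hα a.2 (fun n hn => (keyn n hn).mp)
  have bwd : ∀ y ∈ H, (a : ℚ) / (b : ℚ) * y ∈ G :=
    mul_mem_map H G _ _ hβ b.2 (fun n hn => (keyn n hn).mpr)
  refine ⟨{ toFun := fun x => ⟨(b : ℚ) / (a : ℚ) * x, fwd x x.2⟩,
            invFun := fun y => ⟨(a : ℚ) / (b : ℚ) * y, bwd y y.2⟩,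
            left_inv := fun x => Subtype.ext ?_,
            right_inv := fun y => Subtype.ext ?_,
            map_add' := fun x y => Subtype.ext ?_ }⟩
  · show (a : ℚ) / (b : ℚ) * ((b : ℚ) / (a : ℚ) * (x : ℚ)) = (x : ℚ)
    field_simp
  · show (b : ℚ) / (a : ℚ) * ((a : ℚ) / (b : ℚ) * (y : ℚ)) = (y : ℚ)
    field_simp
  · push_cast
    ring
end
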